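/- arXiv:2601.23073 — 9 statements merged into one kernel-verified Lean document; each statement's English description precedes it below -/
import Mathlib

section
/- Every arrangement cell contains a permutation point p(π, φ) for some permutations π, φ of {1,…,n}; in particular, every arrangement cell is nonempty. -/
/-- An arrangement on `n` points: a pair of strict partial orders on `Fin n`
such that any two distinct indices are comparable in at least one of them. -/
def IsArrangement {n : ℕ} (rRe rIm : Fin n → Fin n → Prop) : Prop :=
  (∀ i, ¬ rRe i i) ∧ (∀ i j k, rRe i j → rRe j k → rRe i k) ∧
  (∀ i, ¬ rIm i i) ∧ (∀ i j k, rIm i j → rIm j k → rIm i k) ∧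
  (∀ i j, i ≠ j → rRe i j ∨ rRe j i ∨ rIm i j ∨ rIm j i)

/-- The arrangement cell attached to a pair of relations. -/
def cell {n : ℕ} (rRe rIm : Fin n → Fin n → Prop) : Set (Fin n → ℂ) :=
  {z | (∀ i j, rRe i j → (z i).re < (z j).re) ∧
       (∀ i j, rIm i j → (z i).im < (z j).im)}

/-- The permutation point `p(π, φ)`: `k`-th coordinate is `π(k) + φ(k)·i`,
where `π(k), φ(k)` take values in `{1, …, n}`. -/
noncomputable def permPoint {n : ℕ} (π φ : Equiv.Perm (Fin n)) : Fin n → ℂ :=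
  fun k => (((π k : ℕ) + 1 : ℝ) : ℂ) + (((φ k : ℕ) + 1 : ℝ) : ℂ) * Complex.I

/-- Any strict partial order on `Fin n` admits a linear extension given by a
permutation of `Fin n`. -/
lemma exists_perm_of_strict {n : ℕ} (r : Fin n → Fin n → Prop)
    (irr : ∀ i, ¬ r i i) (tr : ∀ i j k, r i j → r j k → r i k) :
    ∃ π : Equiv.Perm (Fin n), ∀ i j, r i j → π i < π j := by
  classical
  set r' : Fin n → Fin n → Prop := fun i j => r i j ∨ i = j with hr'
  haveI : IsPartialOrder (Fin n) r' :=
    { refl := fun a => Or.inr rfl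
      trans := by
        intro a b c hab hbc
        rcases hab with hab | rfl
        · rcases hbc with hbc | rfl
          · exact Or.inl (tr _ _ _ hab hbc)
          · exact Or.inl hab
        · exact hbc
      antisymm := by
        intro a b hab hba
        rcases hab with hab | rfl
        · rcases hba with hba | rfl
          · exact absurd (tr _ _ _ hab hba) (irr a)
          · rfl
        · rfl }
  obtain ⟨s, hs, hrs⟩ := extend_partialOrder r'
  haveI : IsTrans (Fin n) s := ⟨hs.trans⟩
  haveI : IsAntisymm (Fin n) s := ⟨hs.antisymm⟩
  haveI : IsTotal (Fin n) s := ⟨hs.total⟩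
  haveI : DecidableRel s := fun a b => Classical.dec _
  set l : List (Fin n) := Finset.univ.sort s with hl
  have hlen : l.length = n := by
    rw [hl, Finset.length_sort, Finset.card_univ, Fintype.card_fin]
  have hmem : ∀ a : Fin n, a ∈ l := fun a => (Finset.mem_sort s).2 (Finset.mem_univ a)
  have hsorted : l.Pairwise s := Finset.pairwise_sort _ s
  set f : Fin n → Fin n := fun k =>
    ⟨l.idxOf k, lt_of_lt_of_le (List.idxOf_lt_length_iff.2 (hmem k)) (le_of_eq hlen)⟩ with hf
  have hinj : Function.Injective f := by
    intro a b hab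
    have h1 : l.idxOf a = l.idxOf b := congrArg Fin.val hab
    have ha := List.idxOf_get (List.idxOf_lt_length_iff.2 (hmem a))
    have hb := List.idxOf_get (List.idxOf_lt_length_iff.2 (hmem b))
    rw [← ha, ← hb]
    exact congrArg l.get (Fin.ext h1)
  refine ⟨Equiv.ofBijective f (Finite.injective_iff_bijective.mp hinj), ?_⟩
  intro i j hij
  show f i < f j
  have hne : i ≠ j := fun e => irr i (e ▸ hij)
  have hsij : s i j := hrs i j (Or.inl hij)
  by_contra hle
  push_neg at hle
  rcases lt_or_eq_of_le hle with hlt | heq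
  · have hlt' : (⟨l.idxOf j, List.idxOf_lt_length_iff.2 (hmem j)⟩ : Fin l.length) <
        ⟨l.idxOf i, List.idxOf_lt_length_iff.2 (hmem i)⟩ := hlt
    have hrel := hsorted.rel_get_of_lt hlt'
    rw [List.idxOf_get, List.idxOf_get] at hrel
    exact hne (hs.antisymm _ _ hsij hrel)
  · exact hne (hinj heq.symm)

theorem arrangement_cell_contains_permPoint {n : ℕ} (rRe rIm : Fin n → Fin n → Prop)
    (h : IsArrangement rRe rIm) :
    ∃ π φ : Equiv.Perm (Fin n), permPoint π φ ∈ cell rRe rIm := by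
  obtain ⟨hirrRe, htrRe, hirrIm, htrIm, -⟩ := h
  obtain ⟨π, hπ⟩ := exists_perm_of_strict rRe hirrRe htrRe
  obtain ⟨φ, hφ⟩ := exists_perm_of_strict rIm hirrIm htrIm
  refine ⟨π, φ, ?_, ?_⟩
  · intro i j hij
    have := hπ i j hij
    simp only [permPoint, Complex.add_re, Complex.ofReal_re, Complex.mul_re,
      Complex.I_re, Complex.I_im, Complex.ofReal_im]
    have h2 : ((π i : ℕ) : ℝ) < ((π j : ℕ) : ℝ) := by
      exact_mod_cast this
    linarith
  · intro i j hij
    have := hφ i j hij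
    simp only [permPoint, Complex.add_im, Complex.ofReal_im, Complex.mul_im,
      Complex.I_re, Complex.I_im, Complex.ofReal_re]
    have h2 : ((φ i : ℕ) : ℝ) < ((φ j : ℕ) : ℝ) := by
      exact_mod_cast this
    linarith
end

section
/- The arrangement cells cover the ordered configuration space: for every z ∈ OC_n there exists an arrangement on n points whose attached cell contains z. -/
/-- The ordered configuration space of `n` points in `ℂ`. -/
def OC (n : ℕ) : Set (Fin n → ℂ) := {z | Function.Injective z}

theorem arrangement_cells_cover_OC {n : ℕ} (z : Fin n → ℂ) (hz : z ∈ OC n) :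
    ∃ rRe rIm : Fin n → Fin n → Prop,
      IsArrangement rRe rIm ∧ z ∈ cell rRe rIm := by
  refine ⟨fun i j => (z i).re < (z j).re, fun i j => (z i).im < (z j).im,
    ⟨fun i => lt_irrefl _, fun i j k => lt_trans, fun i => lt_irrefl _,
     fun i j k => lt_trans, fun i j hij => ?_⟩,
    fun i j h => h, fun i j h => h⟩
  have hne : z i ≠ z j := fun h => hij (hz h)
  rcases lt_trichotomy (z i).re (z j).re with h | h | h
  · exact Or.inl h
  · rcases lt_trichotomy (z i).im (z j).im with h2 | h2 | h2
    · exact Or.inr (Or.inr (Or.inl h2))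
    · exact absurd (Complex.ext h h2) hne
    · exact Or.inr (Or.inr (Or.inr h2))
  · exact Or.inr (Or.inl h)
end

section
/- If A and A' are arrangement cells whose intersection A ∩ A' is nonempty, then A ∩ A' is itself an arrangement cell: there exists an arrangement on n points whose attached cell equals A ∩ A'. -/
lemma transGen_lt {n : ℕ} (r : Fin n → Fin n → Prop) (f : Fin n → ℝ)
    (hf : ∀ i j, r i j → f i < f j) :
    ∀ i j, Relation.TransGen r i j → f i < f j := by
  intro i j hij
  induction hij with
  | single h => exact hf _ _ h
  | tail _ h ih => exact lt_trans ih (hf _ _ h)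

theorem arrangement_cell_inter {n : ℕ}
    (rRe rIm rRe' rIm' : Fin n → Fin n → Prop)
    (h : IsArrangement rRe rIm) (h' : IsArrangement rRe' rIm')
    (hne : (cell rRe rIm ∩ cell rRe' rIm').Nonempty) :
    ∃ sRe sIm : Fin n → Fin n → Prop,
      IsArrangement sRe sIm ∧ cell sRe sIm = cell rRe rIm ∩ cell rRe' rIm' := by
  obtain ⟨z₀, hz₀, hz₀'⟩ := hne
  set sRe := Relation.TransGen (fun i j => rRe i j ∨ rRe' i j) with hsRe
  set sIm := Relation.TransGen (fun i j => rIm i j ∨ rIm' i j) with hsIm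
  have baseRe : ∀ (z : Fin n → ℂ), z ∈ cell rRe rIm → z ∈ cell rRe' rIm' →
      ∀ i j, sRe i j → (z i).re < (z j).re := by
    intro z hz hz' i j hij
    refine transGen_lt _ (fun k => (z k).re) ?_ i j hij
    rintro a b (hab | hab)
    · exact hz.1 a b hab
    · exact hz'.1 a b hab
  have baseIm : ∀ (z : Fin n → ℂ), z ∈ cell rRe rIm → z ∈ cell rRe' rIm' →
      ∀ i j, sIm i j → (z i).im < (z j).im := by
    intro z hz hz' i j hij
    refine transGen_lt _ (fun k => (z k).im) ?_ i j hij
    rintro a b (hab | hab)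
    · exact hz.2 a b hab
    · exact hz'.2 a b hab
  refine ⟨sRe, sIm, ⟨?_, ?_, ?_, ?_, ?_⟩, ?_⟩
  · intro i hi
    exact lt_irrefl _ (baseRe z₀ hz₀ hz₀' i i hi)
  · intro i j k hij hjk; exact hij.trans hjk
  · intro i hi
    exact lt_irrefl _ (baseIm z₀ hz₀ hz₀' i i hi)
  · intro i j k hij hjk; exact hij.trans hjk
  · intro i j hij
    rcases h.2.2.2.2 i j hij with hc | hc | hc | hc
    · exact Or.inl (Relation.TransGen.single (Or.inl hc))
    · exact Or.inr (Or.inl (Relation.TransGen.single (Or.inl hc)))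
    · exact Or.inr (Or.inr (Or.inl (Relation.TransGen.single (Or.inl hc))))
    · exact Or.inr (Or.inr (Or.inr (Relation.TransGen.single (Or.inl hc))))
  · ext z
    constructor
    · intro hz
      refine ⟨⟨fun i j hij => hz.1 i j (Relation.TransGen.single (Or.inl hij)),
              fun i j hij => hz.2 i j (Relation.TransGen.single (Or.inl hij))⟩,
             ⟨fun i j hij => hz.1 i j (Relation.TransGen.single (Or.inr hij)),
              fun i j hij => hz.2 i j (Relation.TransGen.single (Or.inr hij))⟩⟩
    · rintro ⟨hz, hz'⟩
      exact ⟨baseRe z hz hz', baseIm z hz hz'⟩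
end

section
/- Let (≺_Re, ≺_Im) and (≺'_Re, ≺'_Im) be arrangements on n points whose attached cells A and A' satisfy A ∩ A' ≠ ∅. Then the union relation ≺_Re ∪ ≺'_Re is acyclic, i.e., its transitive closure is irreflexive; and likewise the transitive closure of ≺_Im ∪ ≺'_Im is irreflexive. -/
theorem arrangement_union_acyclic {n : ℕ}
    (rRe rIm rRe' rIm' : Fin n → Fin n → Prop)
    (h : IsArrangement rRe rIm) (h' : IsArrangement rRe' rIm')
    (hne : (cell rRe rIm ∩ cell rRe' rIm').Nonempty) :
    (∀ i, ¬ Relation.TransGen (fun a b => rRe a b ∨ rRe' a b) i i) ∧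
    (∀ i, ¬ Relation.TransGen (fun a b => rIm a b ∨ rIm' a b) i i) := by
  obtain ⟨z, ⟨h1, h2⟩, h3, h4⟩ := hne
  have key : ∀ (f : (Fin n → ℂ) → Fin n → ℝ) (r r' : Fin n → Fin n → Prop),
      (∀ i j, r i j → f z i < f z j) → (∀ i j, r' i j → f z i < f z j) →
      ∀ i, ¬ Relation.TransGen (fun a b => r a b ∨ r' a b) i i := by
    intro f r r' hr hr' i hcyc
    have : ∀ a b, Relation.TransGen (fun a b => r a b ∨ r' a b) a b → f z a < f z b := by
      intro a b hab
      induction hab with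
      | single hs => exact hs.elim (hr _ _) (hr' _ _)
      | tail _ hs ih => exact ih.trans (hs.elim (hr _ _) (hr' _ _))
    exact lt_irrefl _ (this i i hcyc)
  exact ⟨key (fun z i => (z i).re) rRe rRe' h1 h3,
         key (fun z i => (z i).im) rIm rIm' h2 h4⟩
end

section
/- Every continuous path F : [0,1] → OC_n admits a finite covering sequence of arrangement cells: there exist arrangement cells A_1,…,A_r and a partition 0 = t_0 ≤ t_1 ≤ … ≤ t_r = 1 such that F([t_{i-1},t_i]) ⊆ A_i for every i. -/
lemma isArrangement_of_injective {n : ℕ} {z : Fin n → ℂ} (hz : Function.Injective z) :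
    IsArrangement (fun i j => (z i).re < (z j).re) (fun i j => (z i).im < (z j).im) := by
  refine ⟨fun i => lt_irrefl _, fun i j k => lt_trans, fun i => lt_irrefl _,
    fun i j k => lt_trans, fun i j hij => ?_⟩
  have hne : z i ≠ z j := fun h => hij (hz h)
  simp only [ne_eq, Complex.ext_iff, not_and_or] at hne
  rcases hne with h | h
  · rcases lt_or_gt_of_ne h with h | h
    · exact Or.inl h
    · exact Or.inr (Or.inl h)
  · rcases lt_or_gt_of_ne h with h | h
    · exact Or.inr (Or.inr (Or.inl h))
    · exact Or.inr (Or.inr (Or.inr h))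

lemma mem_cell_self {n : ℕ} (z : Fin n → ℂ) :
    z ∈ cell (fun i j => (z i).re < (z j).re) (fun i j => (z i).im < (z j).im) :=
  ⟨fun _ _ h => h, fun _ _ h => h⟩

lemma cell_isOpen {n : ℕ} (rRe rIm : Fin n → Fin n → Prop) : IsOpen (cell rRe rIm) := by
  classical
  have : cell rRe rIm =
      (⋂ i, ⋂ j, {z : Fin n → ℂ | rRe i j → (z i).re < (z j).re}) ∩
      (⋂ i, ⋂ j, {z : Fin n → ℂ | rIm i j → (z i).im < (z j).im}) := by
    ext z
    simp only [cell, Set.mem_setOf_eq, Set.mem_inter_iff, Set.mem_iInter]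
  rw [this]
  have hre : ∀ i : Fin n, Continuous fun z : Fin n → ℂ => (z i).re :=
    fun i => Complex.continuous_re.comp (continuous_apply i)
  have him : ∀ i : Fin n, Continuous fun z : Fin n → ℂ => (z i).im :=
    fun i => Complex.continuous_im.comp (continuous_apply i)
  apply IsOpen.inter <;> apply isOpen_iInter_of_finite <;> intro i <;>
    apply isOpen_iInter_of_finite <;> intro j
  · by_cases h : rRe i j
    · simpa [h] using isOpen_lt (hre i) (hre j)
    · simp [h]
  · by_cases h : rIm i j
    · simpa [h] using isOpen_lt (him i) (him j)
    · simp [h]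

theorem exists_finite_cover {n : ℕ} (F : ℝ → (Fin n → ℂ))
    (hFc : ContinuousOn F (Set.Icc 0 1))
    (hFoc : ∀ t ∈ Set.Icc (0:ℝ) 1, F t ∈ OC n) :
    ∃ (r : ℕ) (rRe rIm : Fin r → Fin n → Fin n → Prop) (t : Fin (r + 1) → ℝ),
      (∀ i, IsArrangement (rRe i) (rIm i)) ∧
      Monotone t ∧ t 0 = 0 ∧ t (Fin.last r) = 1 ∧
      ∀ i : Fin r, F '' Set.Icc (t i.castSucc) (t i.succ) ⊆ cell (rRe i) (rIm i) := by
  classical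
  set s := Set.Icc (0:ℝ) 1 with hs_def
  have key : ∀ p : s, ∃ V : Set ℝ, IsOpen V ∧ (p : ℝ) ∈ V ∧
      ∀ u ∈ V ∩ s, F u ∈ cell (fun i j => (F p i).re < (F p j).re)
        (fun i j => (F p i).im < (F p j).im) := by
    rintro ⟨t, ht⟩
    have hc : ContinuousWithinAt F s t := hFc t ht
    have hmem := (cell_isOpen (fun i j => (F t i).re < (F t j).re)
      (fun i j => (F t i).im < (F t j).im)).mem_nhds (mem_cell_self (F t))
    have hpre := hc hmem
    rw [Filter.mem_map, mem_nhdsWithin] at hpre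
    obtain ⟨V, hVopen, htV, hVsub⟩ := hpre
    exact ⟨V, hVopen, htV, fun u hu => hVsub hu⟩
  choose V hVopen hVmem hVsub using key
  have hcover : s ⊆ ⋃ p : s, V p := fun x hx =>
    Set.mem_iUnion.mpr ⟨⟨x, hx⟩, hVmem ⟨x, hx⟩⟩
  obtain ⟨δ, hδ, hball⟩ := lebesgue_number_lemma_of_metric isCompact_Icc hVopen hcover
  obtain ⟨m, hm⟩ := exists_nat_one_div_lt hδ
  set r : ℕ := m + 1 with hr_def
  have hrpos : (0:ℝ) < r := by positivity
  have hx : ∀ i : Fin (r + 1), ((i : ℕ) : ℝ) / r ∈ s := by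
    intro i
    constructor
    · positivity
    · rw [div_le_one hrpos]
      exact_mod_cast Nat.lt_succ_iff.mp i.isLt
  choose τ hτ using fun i : Fin r => hball (((i.castSucc : ℕ) : ℝ) / r) (hx i.castSucc)
  refine ⟨r, fun i a b => (F (τ i) a).re < (F (τ i) b).re,
    fun i a b => (F (τ i) a).im < (F (τ i) b).im,
    fun i : Fin (r + 1) => ((i : ℕ) : ℝ) / r, ?_, ?_, ?_, ?_, ?_⟩
  · intro i
    exact isArrangement_of_injective (hFoc (τ i : ℝ) (τ i).2)
  · intro i j hij
    show ((i : ℕ) : ℝ) / r ≤ ((j : ℕ) : ℝ) / r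
    gcongr
    exact_mod_cast hij
  · simp
  · show ((Fin.last r : ℕ) : ℝ) / r = 1
    rw [Fin.val_last]
    field_simp
  · intro i y hy
    obtain ⟨u, hu, rfl⟩ := hy
    have hu1 : ((i.castSucc : ℕ) : ℝ) / r ≤ u := hu.1
    have hu2 : u ≤ ((i.succ : ℕ) : ℝ) / r := hu.2
    have hus : u ∈ s := by
      constructor
      · exact le_trans (hx i.castSucc).1 hu1
      · exact le_trans hu2 (hx i.succ).2
    have hub : u ∈ Metric.ball (((i.castSucc : ℕ) : ℝ) / r) δ := by
      rw [Metric.mem_ball, Real.dist_eq, abs_sub_lt_iff]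
      have h1 : ((i.succ : ℕ) : ℝ) / r = ((i.castSucc : ℕ) : ℝ) / r + 1 / r := by
        rw [Fin.val_succ, Fin.coe_castSucc]
        push_cast
        ring
      have h2 : (1:ℝ) / r < δ := by
        rw [hr_def]; exact_mod_cast hm
      rw [h1] at hu2
      constructor
      · linarith
      · linarith
    exact hVsub (τ i) u ⟨hτ i hub, hus⟩
end

section
/- Let F, G : [0,1] → OC_n be continuous paths with F(0) = G(0) and F(1) = G(1). If there exists a finite sequence of arrangement cells (A_1,…,A_r) that covers both F and G, then F and G are homotopic relative to their endpoints through paths in OC_n: there exists a continuous H : [0,1]×[0,1] → OC_n with H(0,t) = F(t), H(1,t) = G(t), H(s,0) = F(0), and H(s,1) = F(1) for all s, t. -/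
/-- A finite sequence of sets covers a path `F` (on the time interval `[0,1]`)
if there is a partition `0 = t₀ ≤ t₁ ≤ … ≤ t_r = 1` with `F([t_{i-1}, t_i]) ⊆ A i`. -/
def Covers {n r : ℕ} (A : Fin r → Set (Fin n → ℂ)) (F : ℝ → (Fin n → ℂ)) : Prop :=
  ∃ t : Fin (r + 1) → ℝ, Monotone t ∧ t 0 = 0 ∧ t (Fin.last r) = 1 ∧
    ∀ i : Fin r, F '' Set.Icc (t i.castSucc) (t i.succ) ⊆ A i



noncomputable def ramp (y : ℝ) : ℝ := max 0 (min 1 y)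

lemma ramp_nonneg (y : ℝ) : 0 ≤ ramp y := le_max_left _ _
lemma ramp_le_one (y : ℝ) : ramp y ≤ 1 := max_le zero_le_one (min_le_left _ _)
lemma ramp_of_nonpos {y : ℝ} (h : y ≤ 0) : ramp y = 0 :=
  max_eq_left ((min_le_right _ _).trans h)
lemma ramp_of_one_le {y : ℝ} (h : 1 ≤ y) : ramp y = 1 := by
  unfold ramp; rw [min_eq_left h, max_eq_right zero_le_one]
lemma ramp_continuous : Continuous ramp :=
  continuous_const.max (continuous_const.min continuous_id)

noncomputable def ext' (r : ℕ) (t : Fin (r+1) → ℝ) (m : ℕ) : ℝ := t ⟨min m r, by omega⟩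

lemma ext'_mono {r : ℕ} {t : Fin (r+1) → ℝ} (ht : Monotone t) : Monotone (ext' r t) := by
  intro a b hab
  exact ht (by simp [Fin.le_def]; omega)

lemma ext'_zero (r : ℕ) (t : Fin (r+1) → ℝ) : ext' r t 0 = t 0 := by
  unfold ext'; congr 1

lemma ext'_last (r : ℕ) (t : Fin (r+1) → ℝ) : ext' r t r = t (Fin.last r) := by
  unfold ext'; congr 1; exact Fin.ext (by simp [Fin.last])

lemma ext'_castSucc (r : ℕ) (t : Fin (r+1) → ℝ) (k : Fin r) :
    ext' r t k = t k.castSucc := by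
  unfold ext'; congr 1; exact Fin.ext (by simp [Nat.min_eq_left k.isLt.le])

lemma ext'_succ (r : ℕ) (t : Fin (r+1) → ℝ) (k : Fin r) :
    ext' r t (k + 1) = t k.succ := by
  unfold ext'; congr 1; exact Fin.ext (by simp [Nat.min_eq_left k.isLt])

noncomputable def interp (r : ℕ) (t : Fin (r+1) → ℝ) (x : ℝ) : ℝ :=
  t 0 + ∑ i ∈ Finset.range r, (ext' r t (i+1) - ext' r t i) * ramp (r * x - i)

lemma interp_continuous (r : ℕ) (t : Fin (r+1) → ℝ) : Continuous (interp r t) := by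
  refine continuous_const.add (continuous_finset_sum _ fun i _ => continuous_const.mul ?_)
  exact ramp_continuous.comp ((continuous_const.mul continuous_id).sub continuous_const)

lemma interp_zero (r : ℕ) (t : Fin (r+1) → ℝ) : interp r t 0 = t 0 := by
  unfold interp
  rw [Finset.sum_eq_zero, add_zero]
  intro i _
  rw [ramp_of_nonpos (by rw [mul_zero, zero_sub]; simp), mul_zero]

lemma interp_one (r : ℕ) (t : Fin (r+1) → ℝ) : interp r t 1 = t (Fin.last r) := by
  unfold interp
  rw [Finset.sum_congr rfl (fun i hi => ?_), Finset.sum_range_sub (f := ext' r t),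
    ext'_zero, ext'_last]
  · ring
  · rw [ramp_of_one_le, mul_one]
    have : i < r := Finset.mem_range.mp hi
    have : (i : ℝ) + 1 ≤ r := by exact_mod_cast this
    linarith

lemma interp_eq (r : ℕ) (t : Fin (r+1) → ℝ) {k : ℕ} (hk : k < r) {x : ℝ}
    (h1 : (k:ℝ)/r ≤ x) (h2 : x ≤ ((k:ℝ)+1)/r) :
    interp r t x = ext' r t k + (ext' r t (k+1) - ext' r t k) * ramp (r*x - k) := by
  have hr : (0:ℝ) < r := by
    have : 0 < r := Nat.pos_of_ne_zero (by omega)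
    exact_mod_cast this
  have hx1 : (k:ℝ) ≤ r * x := by
    rw [div_le_iff₀ hr] at h1; linarith [h1]
  have hx2 : r * x ≤ (k:ℝ) + 1 := by
    rw [le_div_iff₀ hr] at h2; linarith [h2]
  unfold interp
  rw [Finset.range_eq_Ico, ← Finset.sum_Ico_consecutive _ (Nat.zero_le (k+1)) hk,
    ← Finset.range_eq_Ico, Finset.sum_range_succ]
  have hz : ∑ i ∈ Finset.Ico (k+1) r, (ext' r t (i+1) - ext' r t i) * ramp ((r:ℝ) * x - i) = 0 := by
    refine Finset.sum_eq_zero fun i hi => ?_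
    have hik : k + 1 ≤ i := (Finset.mem_Ico.mp hi).1
    have : ((r:ℝ)) * x - i ≤ 0 := by
      have : ((k:ℝ)) + 1 ≤ i := by exact_mod_cast hik
      linarith
    rw [ramp_of_nonpos this, mul_zero]
  have htel : ∑ i ∈ Finset.range k, (ext' r t (i+1) - ext' r t i) * ramp ((r:ℝ) * x - i)
      = ext' r t k - ext' r t 0 := by
    rw [Finset.sum_congr rfl fun i hi => ?_, Finset.sum_range_sub (f := ext' r t)]
    have hik : i + 1 ≤ k := Finset.mem_range.mp hi
    have : (1:ℝ) ≤ (r:ℝ) * x - i := by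
      have : ((i:ℝ)) + 1 ≤ k := by exact_mod_cast hik
      linarith
    rw [ramp_of_one_le this, mul_one]
  rw [hz, htel, ext'_zero]
  ring

lemma interp_mem (r : ℕ) {t : Fin (r+1) → ℝ} (ht : Monotone t) {k : ℕ} (hk : k < r) {x : ℝ}
    (h1 : (k:ℝ)/r ≤ x) (h2 : x ≤ ((k:ℝ)+1)/r) :
    interp r t x ∈ Set.Icc (ext' r t k) (ext' r t (k+1)) := by
  rw [interp_eq r t hk h1 h2]
  have hmono : ext' r t k ≤ ext' r t (k+1) := ext'_mono ht (Nat.le_succ k)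
  have c1 := ramp_nonneg ((r:ℝ)*x - k)
  have c2 := ramp_le_one ((r:ℝ)*x - k)
  constructor <;> nlinarith

lemma exists_seg (r : ℕ) (hr : 0 < r) {x : ℝ} (hx : x ∈ Set.Icc (0:ℝ) 1) :
    ∃ k : Fin r, ((k:ℕ):ℝ)/r ≤ x ∧ x ≤ (((k:ℕ):ℝ)+1)/r := by
  have hrR : (0:ℝ) < r := by exact_mod_cast hr
  have hx0 : (0:ℝ) ≤ (r:ℝ) * x := by nlinarith [hx.1]
  set m : ℕ := (⌊(r:ℝ) * x⌋).toNat with hm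
  have hcast : ((m:ℝ)) = ((⌊(r:ℝ)*x⌋ : ℤ) : ℝ) := by
    rw [hm]; norm_cast; exact Int.toNat_of_nonneg (Int.floor_nonneg.mpr hx0)
  have hle : (m:ℝ) ≤ (r:ℝ) * x := by rw [hcast]; exact Int.floor_le _
  have hlt : (r:ℝ) * x < (m:ℝ) + 1 := by rw [hcast]; exact Int.lt_floor_add_one _
  by_cases hmr : m < r
  · refine ⟨⟨m, hmr⟩, ?_, ?_⟩
    · rw [div_le_iff₀ hrR]; simpa [mul_comm] using hle
    · rw [le_div_iff₀ hrR]; simp only [Fin.val_mk]; linarith [hlt]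
  · refine ⟨⟨r - 1, by omega⟩, ?_, ?_⟩
    · rw [div_le_iff₀ hrR]
      have h1 : ((r:ℝ)) ≤ (m:ℝ) := by exact_mod_cast (by omega : r ≤ m)
      have h2 : ((r-1:ℕ):ℝ) = (r:ℝ) - 1 := by
        push_cast [Nat.cast_sub (by omega : 1 ≤ r)]; ring
      simp only [Fin.val_mk]
      rw [h2]
      nlinarith [hx.2]
    · have h2 : ((r-1:ℕ):ℝ) = (r:ℝ) - 1 := by
        push_cast [Nat.cast_sub (by omega : 1 ≤ r)]; ring
      simp only [Fin.val_mk]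
      rw [h2]
      rw [le_div_iff₀ hrR]
      nlinarith [hx.2]

lemma interp_mem_unit {r : ℕ} (hr : 0 < r) {t : Fin (r+1) → ℝ} (ht : Monotone t)
    (ht0 : t 0 = 0) (ht1 : t (Fin.last r) = 1) {x : ℝ} (hx : x ∈ Set.Icc (0:ℝ) 1) :
    interp r t x ∈ Set.Icc (0:ℝ) 1 := by
  obtain ⟨k, hk1, hk2⟩ := exists_seg r hr hx
  have h := interp_mem r ht k.isLt hk1 hk2
  constructor
  · calc (0:ℝ) = ext' r t 0 := by rw [ext'_zero, ht0]
    _ ≤ ext' r t k := ext'_mono ht (Nat.zero_le _)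
    _ ≤ _ := h.1
  · calc interp r t x ≤ ext' r t ((k:ℕ)+1) := h.2
    _ ≤ ext' r t r := ext'_mono ht k.isLt
    _ = 1 := by rw [ext'_last, ht1]

lemma combo_lt {a b x1 x2 y1 y2 : ℝ} (ha : 0 ≤ a) (hb : 0 ≤ b) (hab : a + b = 1)
    (h1 : x1 < x2) (h2 : y1 < y2) : a * x1 + b * y1 < a * x2 + b * y2 := by
  rcases eq_or_lt_of_le ha with h | h
  · have : b = 1 := by linarith
    nlinarith
  · nlinarith

lemma combo_mem_unit {a x y : ℝ} (ha : a ∈ Set.Icc (0:ℝ) 1)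
    (hx : x ∈ Set.Icc (0:ℝ) 1) (hy : y ∈ Set.Icc (0:ℝ) 1) :
    (1 - a) * x + a * y ∈ Set.Icc (0:ℝ) 1 := by
  obtain ⟨ha0, ha1⟩ := ha; obtain ⟨hx0, hx1⟩ := hx; obtain ⟨hy0, hy1⟩ := hy
  constructor <;> nlinarith

lemma cell_subset_OC {n : ℕ} {rRe rIm : Fin n → Fin n → Prop}
    (h : IsArrangement rRe rIm) : cell rRe rIm ⊆ OC n := by
  intro z hz i j hij
  by_contra hne
  obtain ⟨hre, him⟩ := hz
  rcases h.2.2.2.2 i j hne with hc | hc | hc | hc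
  · exact absurd (congrArg Complex.re hij) (ne_of_lt (hre i j hc))
  · exact absurd (congrArg Complex.re hij) (ne_of_gt (hre j i hc))
  · exact absurd (congrArg Complex.im hij) (ne_of_lt (him i j hc))
  · exact absurd (congrArg Complex.im hij) (ne_of_gt (him j i hc))

lemma cell_convex {n : ℕ} {rRe rIm : Fin n → Fin n → Prop} {z w : Fin n → ℂ}
    (hz : z ∈ cell rRe rIm) (hw : w ∈ cell rRe rIm) {a b : ℝ} (ha : 0 ≤ a) (hb : 0 ≤ b)
    (hab : a + b = 1) : a • z + b • w ∈ cell rRe rIm := by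
  obtain ⟨hz1, hz2⟩ := hz; obtain ⟨hw1, hw2⟩ := hw
  constructor
  · intro i j hij
    simp only [Pi.add_apply, Pi.smul_apply, Complex.add_re, Complex.smul_re, smul_eq_mul]
    exact combo_lt ha hb hab (hz1 i j hij) (hw1 i j hij)
  · intro i j hij
    simp only [Pi.add_apply, Pi.smul_apply, Complex.add_im, Complex.smul_im, smul_eq_mul]
    exact combo_lt ha hb hab (hz2 i j hij) (hw2 i j hij)

lemma continuousOn_union_closed {X Y : Type*} [TopologicalSpace X] [TopologicalSpace Y]
    {s t : Set X} {f : X → Y} (hs : IsClosed s) (ht : IsClosed t)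
    (hfs : ContinuousOn f s) (hft : ContinuousOn f t) : ContinuousOn f (s ∪ t) := by
  intro x hx
  apply ContinuousWithinAt.union
  · by_cases h : x ∈ s
    · exact hfs x h
    · exact continuousWithinAt_of_notMem_closure (by rwa [hs.closure_eq])
  · by_cases h : x ∈ t
    · exact hft x h
    · exact continuousWithinAt_of_notMem_closure (by rwa [ht.closure_eq])
theorem homotopic_of_common_cover {n : ℕ} (F G : ℝ → (Fin n → ℂ))
    (hFc : ContinuousOn F (Set.Icc 0 1)) (hGc : ContinuousOn G (Set.Icc 0 1))
    (hFoc : ∀ t ∈ Set.Icc (0:ℝ) 1, F t ∈ OC n)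
    (hGoc : ∀ t ∈ Set.Icc (0:ℝ) 1, G t ∈ OC n)
    (h0 : F 0 = G 0) (h1 : F 1 = G 1)
    (hcov : ∃ (r : ℕ) (A : Fin r → Set (Fin n → ℂ)),
      (∀ i, ∃ rRe rIm : Fin n → Fin n → Prop,
        IsArrangement rRe rIm ∧ A i = cell rRe rIm) ∧
      Covers A F ∧ Covers A G) :
    ∃ H : ℝ → ℝ → (Fin n → ℂ),
      ContinuousOn (fun p : ℝ × ℝ => H p.1 p.2)
        (Set.Icc (0:ℝ) 1 ×ˢ Set.Icc (0:ℝ) 1) ∧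
      (∀ s ∈ Set.Icc (0:ℝ) 1, ∀ t ∈ Set.Icc (0:ℝ) 1, H s t ∈ OC n) ∧
      (∀ t ∈ Set.Icc (0:ℝ) 1, H 0 t = F t) ∧
      (∀ t ∈ Set.Icc (0:ℝ) 1, H 1 t = G t) ∧
      (∀ s ∈ Set.Icc (0:ℝ) 1, H s 0 = F 0 ∧ H s 1 = F 1) := by
  obtain ⟨r, A, hA, ⟨tF, htFm, htF0, htF1, htFcov⟩, ⟨tG, htGm, htG0, htG1, htGcov⟩⟩ := hcov
  have hr : 0 < r := by
    by_contra h
    have hr0 : r = 0 := by omega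
    subst hr0
    have he : Fin.last 0 = (0 : Fin 1) := Fin.ext (by simp)
    rw [he, htF0] at htF1
    norm_num at htF1
  have hφmem : ∀ x ∈ Set.Icc (0:ℝ) 1, interp r tF x ∈ Set.Icc (0:ℝ) 1 :=
    fun x hx => interp_mem_unit hr htFm htF0 htF1 hx
  have hψmem : ∀ x ∈ Set.Icc (0:ℝ) 1, interp r tG x ∈ Set.Icc (0:ℝ) 1 :=
    fun x hx => interp_mem_unit hr htGm htG0 htG1 hx
  have hFA : ∀ (k : Fin r) (x : ℝ), ((k:ℕ):ℝ)/r ≤ x → x ≤ (((k:ℕ):ℝ)+1)/r →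
      F (interp r tF x) ∈ A k := by
    intro k x hx1 hx2
    have hm := interp_mem r htFm k.isLt hx1 hx2
    rw [ext'_castSucc, ext'_succ] at hm
    exact htFcov k ⟨_, hm, rfl⟩
  have hGA : ∀ (k : Fin r) (x : ℝ), ((k:ℕ):ℝ)/r ≤ x → x ≤ (((k:ℕ):ℝ)+1)/r →
      G (interp r tG x) ∈ A k := by
    intro k x hx1 hx2
    have hm := interp_mem r htGm k.isLt hx1 hx2
    rw [ext'_castSucc, ext'_succ] at hm
    exact htGcov k ⟨_, hm, rfl⟩
  refine ⟨fun s t => if s ≤ 1/3 then F ((1 - ramp (3*s))*t + ramp (3*s) * interp r tF t)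
      else if s ≤ 2/3 then
        (1 - ramp (3*s-1)) • F (interp r tF t) + ramp (3*s-1) • G (interp r tG t)
      else G ((1 - ramp (3*s-2)) * interp r tG t + ramp (3*s-2) * t),
    ?_, ?_, ?_, ?_, ?_⟩
  · -- continuity
    have hramp1 : Continuous fun p : ℝ × ℝ => ramp (3 * p.1) :=
      ramp_continuous.comp (continuous_const.mul continuous_fst)
    have hramp2 : Continuous fun p : ℝ × ℝ => ramp (3 * p.1 - 1) :=
      ramp_continuous.comp ((continuous_const.mul continuous_fst).sub continuous_const)
    have hramp3 : Continuous fun p : ℝ × ℝ => ramp (3 * p.1 - 2) :=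
      ramp_continuous.comp ((continuous_const.mul continuous_fst).sub continuous_const)
    have hφc : Continuous fun p : ℝ × ℝ => interp r tF p.2 :=
      (interp_continuous r tF).comp continuous_snd
    have hψc : Continuous fun p : ℝ × ℝ => interp r tG p.2 :=
      (interp_continuous r tG).comp continuous_snd
    have hB1 : ContinuousOn
        (fun p : ℝ × ℝ => F ((1 - ramp (3*p.1))*p.2 + ramp (3*p.1) * interp r tF p.2))
        (Set.Icc (0:ℝ) 1 ×ˢ Set.Icc (0:ℝ) 1) := by
      refine hFc.comp (Continuous.continuousOn ?_) ?_
      · exact ((continuous_const.sub hramp1).mul continuous_snd).add (hramp1.mul hφc)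
      · intro p hp
        exact combo_mem_unit ⟨ramp_nonneg _, ramp_le_one _⟩ hp.2 (hφmem _ hp.2)
    have hB2 : ContinuousOn
        (fun p : ℝ × ℝ => (1 - ramp (3*p.1-1)) • F (interp r tF p.2)
          + ramp (3*p.1-1) • G (interp r tG p.2))
        (Set.Icc (0:ℝ) 1 ×ˢ Set.Icc (0:ℝ) 1) := by
      refine ContinuousOn.add (ContinuousOn.fun_smul ?_ ?_) (ContinuousOn.fun_smul ?_ ?_)
      · exact (continuous_const.sub hramp2).continuousOn
      · exact hFc.comp hφc.continuousOn fun p hp => hφmem _ hp.2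
      · exact hramp2.continuousOn
      · exact hGc.comp hψc.continuousOn fun p hp => hψmem _ hp.2
    have hB3 : ContinuousOn
        (fun p : ℝ × ℝ => G ((1 - ramp (3*p.1-2)) * interp r tG p.2 + ramp (3*p.1-2) * p.2))
        (Set.Icc (0:ℝ) 1 ×ˢ Set.Icc (0:ℝ) 1) := by
      refine hGc.comp (Continuous.continuousOn ?_) ?_
      · exact ((continuous_const.sub hramp3).mul hψc).add (hramp3.mul continuous_snd)
      · intro p hp
        exact combo_mem_unit ⟨ramp_nonneg _, ramp_le_one _⟩ (hψmem _ hp.2) hp.2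
    have hsub1 : Set.Icc (0:ℝ) (1/3) ×ˢ Set.Icc (0:ℝ) 1 ⊆ Set.Icc (0:ℝ) 1 ×ˢ Set.Icc (0:ℝ) 1 :=
      Set.prod_mono (Set.Icc_subset_Icc le_rfl (by norm_num)) subset_rfl
    have hsub2 : Set.Icc (1/3:ℝ) (2/3) ×ˢ Set.Icc (0:ℝ) 1 ⊆ Set.Icc (0:ℝ) 1 ×ˢ Set.Icc (0:ℝ) 1 :=
      Set.prod_mono (Set.Icc_subset_Icc (by norm_num) (by norm_num)) subset_rfl
    have hsub3 : Set.Icc (2/3:ℝ) 1 ×ˢ Set.Icc (0:ℝ) 1 ⊆ Set.Icc (0:ℝ) 1 ×ˢ Set.Icc (0:ℝ) 1 :=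
      Set.prod_mono (Set.Icc_subset_Icc (by norm_num) le_rfl) subset_rfl
    have h1c : ContinuousOn
        (fun p : ℝ × ℝ => if p.1 ≤ 1/3 then F ((1 - ramp (3*p.1))*p.2 + ramp (3*p.1) * interp r tF p.2)
          else if p.1 ≤ 2/3 then
            (1 - ramp (3*p.1-1)) • F (interp r tF p.2) + ramp (3*p.1-1) • G (interp r tG p.2)
          else G ((1 - ramp (3*p.1-2)) * interp r tG p.2 + ramp (3*p.1-2) * p.2))
        (Set.Icc (0:ℝ) (1/3) ×ˢ Set.Icc (0:ℝ) 1) := by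
      refine (hB1.mono hsub1).congr fun p hp => ?_
      simp only [if_pos hp.1.2]
    have h2c : ContinuousOn
        (fun p : ℝ × ℝ => if p.1 ≤ 1/3 then F ((1 - ramp (3*p.1))*p.2 + ramp (3*p.1) * interp r tF p.2)
          else if p.1 ≤ 2/3 then
            (1 - ramp (3*p.1-1)) • F (interp r tF p.2) + ramp (3*p.1-1) • G (interp r tG p.2)
          else G ((1 - ramp (3*p.1-2)) * interp r tG p.2 + ramp (3*p.1-2) * p.2))
        (Set.Icc (1/3:ℝ) (2/3) ×ˢ Set.Icc (0:ℝ) 1) := by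
      refine (hB2.mono hsub2).congr fun p hp => ?_
      by_cases h : p.1 ≤ 1/3
      · have he : p.1 = 1/3 := le_antisymm h hp.1.1
        have e1 : ramp (1:ℝ) = 1 := ramp_of_one_le le_rfl
        have e0 : ramp (0:ℝ) = 0 := ramp_of_nonpos le_rfl
        simp only [if_pos h, he]
        norm_num [e1, e0, one_smul, zero_smul]
      · simp only [if_neg h, if_pos hp.1.2]
    have h3c : ContinuousOn
        (fun p : ℝ × ℝ => if p.1 ≤ 1/3 then F ((1 - ramp (3*p.1))*p.2 + ramp (3*p.1) * interp r tF p.2)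
          else if p.1 ≤ 2/3 then
            (1 - ramp (3*p.1-1)) • F (interp r tF p.2) + ramp (3*p.1-1) • G (interp r tG p.2)
          else G ((1 - ramp (3*p.1-2)) * interp r tG p.2 + ramp (3*p.1-2) * p.2))
        (Set.Icc (2/3:ℝ) 1 ×ˢ Set.Icc (0:ℝ) 1) := by
      refine (hB3.mono hsub3).congr fun p hp => ?_
      have h : ¬ p.1 ≤ 1/3 := by
        have := hp.1.1; intro hc; linarith
      by_cases h2 : p.1 ≤ 2/3
      · have he : p.1 = 2/3 := le_antisymm h2 hp.1.1
        have e1 : ramp (1:ℝ) = 1 := ramp_of_one_le le_rfl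
        have e0 : ramp (0:ℝ) = 0 := ramp_of_nonpos le_rfl
        simp only [if_neg h, if_pos h2, he]
        norm_num [e1, e0, one_smul, zero_smul]
      · simp only [if_neg h, if_neg h2]
    have hcover : Set.Icc (0:ℝ) 1 ×ˢ Set.Icc (0:ℝ) 1 ⊆
        (Set.Icc (0:ℝ) (1/3) ×ˢ Set.Icc (0:ℝ) 1) ∪
        ((Set.Icc (1/3:ℝ) (2/3) ×ˢ Set.Icc (0:ℝ) 1) ∪ (Set.Icc (2/3:ℝ) 1 ×ˢ Set.Icc (0:ℝ) 1)) := by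
      intro p hp
      rcases le_or_gt p.1 (1/3) with h | h
      · exact Or.inl ⟨⟨hp.1.1, h⟩, hp.2⟩
      rcases le_or_gt p.1 (2/3) with h2 | h2
      · exact Or.inr (Or.inl ⟨⟨h.le, h2⟩, hp.2⟩)
      · exact Or.inr (Or.inr ⟨⟨h2.le, hp.1.2⟩, hp.2⟩)
    exact (continuousOn_union_closed (isClosed_Icc.prod isClosed_Icc)
      ((isClosed_Icc.prod isClosed_Icc).union (isClosed_Icc.prod isClosed_Icc)) h1c
      (continuousOn_union_closed (isClosed_Icc.prod isClosed_Icc)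
        (isClosed_Icc.prod isClosed_Icc) h2c h3c)).mono hcover
  · -- OC membership
    intro s hs t htt
    by_cases hb1 : s ≤ 1/3
    · simp only [if_pos hb1]
      exact hFoc _ (combo_mem_unit ⟨ramp_nonneg _, ramp_le_one _⟩ htt (hφmem _ htt))
    by_cases hb2 : s ≤ 2/3
    · simp only [if_neg hb1, if_pos hb2]
      obtain ⟨k, hk1, hk2⟩ := exists_seg r hr htt
      obtain ⟨rRe, rIm, harr, hAk⟩ := hA k
      have hFk := hFA k t hk1 hk2
      have hGk := hGA k t hk1 hk2
      rw [hAk] at hFk hGk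
      refine cell_subset_OC harr (cell_convex hFk hGk ?_ (ramp_nonneg _) (by ring))
      linarith [ramp_le_one (3*s-1)]
    · simp only [if_neg hb1, if_neg hb2]
      exact hGoc _ (combo_mem_unit ⟨ramp_nonneg _, ramp_le_one _⟩ (hψmem _ htt) htt)
  · -- H 0 t = F t
    intro t htt
    simp only [if_pos (by norm_num : (0:ℝ) ≤ 1/3)]
    rw [show (3:ℝ)*0 = 0 by ring, ramp_of_nonpos le_rfl]
    norm_num
  · -- H 1 t = G t
    intro t htt
    have e1 : ramp (1:ℝ) = 1 := ramp_of_one_le le_rfl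
    norm_num [e1]
  · -- endpoints
    intro s hs
    constructor
    · by_cases hb1 : s ≤ 1/3
      · simp only [if_pos hb1, interp_zero, htF0]
        norm_num
      by_cases hb2 : s ≤ 2/3
      · simp only [if_neg hb1, if_pos hb2, interp_zero, htF0, htG0, ← h0]
        rw [← add_smul, show (1 - ramp (3*s-1)) + ramp (3*s-1) = 1 by ring, one_smul]
      · simp only [if_neg hb1, if_neg hb2, interp_zero, htG0, ← h0]
        norm_num
        rw [← h0]
    · by_cases hb1 : s ≤ 1/3
      · simp only [if_pos hb1, interp_one, htF1]
        rw [show (1 - ramp (3*s))*1 + ramp (3*s) * 1 = 1 by ring]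
      by_cases hb2 : s ≤ 2/3
      · simp only [if_neg hb1, if_pos hb2, interp_one, htF1, htG1, ← h1]
        rw [← add_smul, show (1 - ramp (3*s-1)) + ramp (3*s-1) = 1 by ring, one_smul]
      · simp only [if_neg hb1, if_neg hb2, interp_one, htG1, ← h1]
        rw [show (1 - ramp (3*s-2))*1 + ramp (3*s-2) * 1 = 1 by ring, ← h1]
end

section
/- For any permutations π, φ of {1,…,n}, the piecewise linear loop that goes from q(π) to p(π, φ) in a straight line, then from p(π, φ) to p(π, id) in a straight line, then from p(π, id) back to q(π) in a straight line, lies entirely in OC_n and is null-homotopic: it is homotopic, relative to its endpoints, to the constant path at q(π) through paths in OC_n. -/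
/-- The point `q(π) = (π(1), …, π(n))`, with values in `{1, …, n}`. -/
noncomputable def qPoint {n : ℕ} (π : Equiv.Perm (Fin n)) : Fin n → ℂ :=
  fun k => (((π k : ℕ) + 1 : ℝ) : ℂ)

/-- Straight-line segment from `a` to `b`, parametrized on `[0,1]`. -/
noncomputable def seg {n : ℕ} (a b : Fin n → ℂ) (t : ℝ) : Fin n → ℂ :=
  fun k => ((1 - t : ℝ) : ℂ) * a k + (t : ℂ) * b k

/-- The piecewise linear loop `q(π) → p(π, φ) → p(π, id) → q(π)`. -/
noncomputable def triLoop {n : ℕ} (π φ : Equiv.Perm (Fin n)) (t : ℝ) : Fin n → ℂ :=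
  if t ≤ 1/3 then seg (qPoint π) (permPoint π φ) (3 * t)
  else if t ≤ 2/3 then seg (permPoint π φ) (permPoint π 1) (3 * t - 1)
  else seg (permPoint π 1) (qPoint π) (3 * t - 2)

/-- If every coordinate of `z` has real part `π(k) + 1`, then `z` is injective. -/
lemma re_inj {n : ℕ} (π : Equiv.Perm (Fin n)) (z : Fin n → ℂ)
    (h : ∀ k, (z k).re = (π k : ℕ) + 1) : Function.Injective z := by
  intro j k hjk
  have h2 : ((π j : ℕ) : ℝ) + 1 = ((π k : ℕ) : ℝ) + 1 := by
    rw [← h j, ← h k, hjk]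
  have h3 : (π j : ℕ) = (π k : ℕ) := by exact_mod_cast (by linarith : ((π j : ℕ) : ℝ) = (π k : ℕ))
  exact π.injective (Fin.ext h3)

lemma triLoop_re {n : ℕ} (π φ : Equiv.Perm (Fin n)) (t : ℝ) (k : Fin n) :
    (triLoop π φ t k).re = (π k : ℕ) + 1 := by
  unfold triLoop seg qPoint permPoint
  split_ifs <;>
    simp [Complex.add_re, Complex.mul_re, Complex.ofReal_re, Complex.ofReal_im,
      Complex.I_re, Complex.I_im] <;> ring

lemma seg_cont {n : ℕ} (a b : Fin n → ℂ) (k : Fin n) (f : ℝ → ℝ) (hf : Continuous f) :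
    Continuous fun t => seg a b (f t) k := by
  unfold seg; fun_prop

lemma triLoop_cont {n : ℕ} (π φ : Equiv.Perm (Fin n)) (k : Fin n) :
    Continuous fun t : ℝ => triLoop π φ t k := by
  unfold triLoop
  simp only [apply_ite (fun f : Fin n → ℂ => f k)]
  have h1 : Continuous fun t : ℝ => seg (qPoint π) (permPoint π φ) (3 * t) k :=
    seg_cont _ _ _ _ (by fun_prop)
  have h2 : Continuous fun t : ℝ => seg (permPoint π φ) (permPoint π 1) (3 * t - 1) k :=
    seg_cont _ _ _ _ (by fun_prop)
  have h3 : Continuous fun t : ℝ => seg (permPoint π 1) (qPoint π) (3 * t - 2) k :=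
    seg_cont _ _ _ _ (by fun_prop)
  have hinner : Continuous fun t : ℝ =>
      if t ≤ 2/3 then seg (permPoint π φ) (permPoint π 1) (3 * t - 1) k
      else seg (permPoint π 1) (qPoint π) (3 * t - 2) k := by
    apply Continuous.if_le h2 h3 continuous_id continuous_const
    intro t ht
    subst ht
    simp [seg]; norm_num
  apply Continuous.if_le h1 hinner continuous_id continuous_const
  intro t ht
  subst ht
  norm_num [seg]

theorem triLoop_nullhomotopic {n : ℕ} (π φ : Equiv.Perm (Fin n)) :
    (∀ t ∈ Set.Icc (0:ℝ) 1, triLoop π φ t ∈ OC n) ∧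
    ∃ H : ℝ → ℝ → (Fin n → ℂ),
      ContinuousOn (fun p : ℝ × ℝ => H p.1 p.2)
        (Set.Icc (0:ℝ) 1 ×ˢ Set.Icc (0:ℝ) 1) ∧
      (∀ s ∈ Set.Icc (0:ℝ) 1, ∀ t ∈ Set.Icc (0:ℝ) 1, H s t ∈ OC n) ∧
      (∀ t ∈ Set.Icc (0:ℝ) 1, H 0 t = triLoop π φ t) ∧
      (∀ t ∈ Set.Icc (0:ℝ) 1, H 1 t = qPoint π) ∧
      (∀ s ∈ Set.Icc (0:ℝ) 1, H s 0 = qPoint π ∧ H s 1 = qPoint π) := by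
  have hq : ∀ k, (qPoint π k).re = (π k : ℕ) + 1 := by
    intro k; simp [qPoint]
  have htri0 : triLoop π φ 0 = qPoint π := by
    funext k
    simp only [triLoop, if_pos (by norm_num : (0:ℝ) ≤ 1/3)]
    simp [seg]
  have htri1 : triLoop π φ 1 = qPoint π := by
    funext k
    simp only [triLoop, if_neg (by norm_num : ¬ (1:ℝ) ≤ 1/3),
      if_neg (by norm_num : ¬ (1:ℝ) ≤ 2/3)]
    norm_num [seg]
  refine ⟨fun t _ => re_inj π _ (triLoop_re π φ t), ?_⟩
  refine ⟨fun s t => seg (triLoop π φ t) (qPoint π) s, ?_, ?_, ?_, ?_, ?_⟩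
  · apply Continuous.continuousOn
    apply continuous_pi
    intro k
    have h1 : Continuous fun p : ℝ × ℝ => triLoop π φ p.2 k :=
      (triLoop_cont π φ k).comp continuous_snd
    simp only [seg]
    fun_prop
  · intro s _ t _
    apply re_inj π
    intro k
    have h1 := triLoop_re π φ t k
    have h2 := hq k
    simp only [seg, Complex.add_re, Complex.mul_re, Complex.ofReal_re, Complex.ofReal_im]
    rw [h1, h2]; ring
  · intro t _
    funext k; simp [seg]
  · intro t _
    funext k; simp [seg]
  · intro s _
    constructor
    · show seg (triLoop π φ 0) (qPoint π) s = qPoint π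
      rw [htri0]; funext k; simp only [seg]; push_cast; ring
    · show seg (triLoop π φ 1) (qPoint π) s = qPoint π
      rw [htri1]; funext k; simp only [seg]; push_cast; ring
end

section
/- Let r be a binary relation on a finite set V (the edge relation of a directed graph) whose transitive closure is irreflexive (the graph is acyclic), and let i, j ∈ V with r i j. Define the relation r' by: r' u v holds iff either (r u v and (u,v) ≠ (i,j)), or (u = i and r j v), or (v = j and r u i). Then for all u, v ∈ V with (u,v) ≠ (i,j), if v is reachable from u by the transitive closure of r, then v is reachable from u by the transitive closure of r'. -/
theorem reachability_preserved_by_edge_rewrite {V : Type*} [Finite V]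
    (r : V → V → Prop) (hacyc : ∀ v, ¬ Relation.TransGen r v v)
    (i j : V) (hij : r i j) :
    ∀ u v : V, (u, v) ≠ (i, j) → Relation.TransGen r u v →
      Relation.TransGen
        (fun a b => (r a b ∧ (a, b) ≠ (i, j)) ∨ (a = i ∧ r j b) ∨ (b = j ∧ r a i))
        u v := by
  set r' : V → V → Prop :=
    fun a b => (r a b ∧ (a, b) ≠ (i, j)) ∨ (a = i ∧ r j b) ∨ (b = j ∧ r a i) with hr'
  have hne : i ≠ j := by
    rintro rfl; exact hacyc i (Relation.TransGen.single hij)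
  have hji : ¬ r j i := fun h =>
    hacyc i ((Relation.TransGen.single hij).tail h)
  have key : ∀ u v : V, Relation.TransGen r u v →
      (u = i ∧ v = j) ∨ Relation.TransGen r' u v := by
    intro u v h
    induction h using Relation.TransGen.head_induction_on with
    | single h =>
      rename_i u
      by_cases hc : u = i ∧ v = j
      · exact Or.inl hc
      · refine Or.inr (Relation.TransGen.single (Or.inl ⟨h, ?_⟩))
        exact fun he => hc ⟨congrArg Prod.fst he, congrArg Prod.snd he⟩
    | head hub hbv IH =>
      rename_i u b
      rcases IH with ⟨rfl, rfl⟩ | IH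
      · -- edge u → i, then (i, j): replace with r' u j
        exact Or.inr (Relation.TransGen.single (Or.inr (Or.inr ⟨rfl, hub⟩)))
      · by_cases hc : u = i ∧ b = j
        · -- first edge is (i,j); absorb it into the next edge of the r'-path
          obtain ⟨rfl, rfl⟩ := hc
          obtain ⟨c, hjc, hcv⟩ := Relation.TransGen.head'_iff.mp IH
          rcases hjc with ⟨hjc, _⟩ | ⟨hji', _⟩ | ⟨rfl, hji2⟩
          · exact Or.inr (Relation.TransGen.head' (Or.inr (Or.inl ⟨rfl, hjc⟩)) hcv)
          · exact absurd hji' hne.symm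
          · exact absurd hji2 hji
        · refine Or.inr (Relation.TransGen.head (Or.inl ⟨hub, ?_⟩) IH)
          exact fun he => hc ⟨congrArg Prod.fst he, congrArg Prod.snd he⟩
  intro u v huv h
  rcases key u v h with ⟨rfl, rfl⟩ | h'
  · exact absurd rfl huv
  · exact h'
end

section
/- Let F, G : [0,1] → OC_n be continuous paths that are both covered by a common finite sequence of arrangement cells (A_1,…,A_r), realized by a common partition 0 = t_0 ≤ t_1 ≤ … ≤ t_r = 1 (so F([t_{i-1},t_i]) ⊆ A_i and G([t_{i-1},t_i]) ⊆ A_i for every i). Then the straight-line homotopy H(s,t) = (1−s)·F(t) + s·G(t) takes values in OC_n for all s, t ∈ [0,1]. -/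
lemma exists_interval_aux {r : ℕ} (hr : 0 < r) (t : Fin (r+1) → ℝ) (hmono : Monotone t)
    {u : ℝ} (h0 : t 0 ≤ u) (h1 : u ≤ t (Fin.last r)) :
    ∃ i : Fin r, u ∈ Set.Icc (t i.castSucc) (t i.succ) := by
  classical
  set S : Finset (Fin (r+1)) := Finset.univ.filter (fun i => t i ≤ u) with hS
  have hne : S.Nonempty := ⟨0, by simp [hS, h0]⟩
  set i₀ := S.max' hne with hi₀
  have hi₀mem : i₀ ∈ S := S.max'_mem hne
  have hti₀ : t i₀ ≤ u := by simpa [hS] using hi₀mem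
  by_cases hlt : (i₀ : ℕ) < r
  · refine ⟨⟨i₀, hlt⟩, ?_, ?_⟩
    · simpa [Fin.castSucc] using hti₀
    · by_contra h
      push_neg at h
      have : (⟨i₀, hlt⟩ : Fin r).succ ∈ S := by
        simp only [hS, Finset.mem_filter, Finset.mem_univ, true_and]
        exact le_of_lt h
      have := S.le_max' _ this
      rw [← hi₀] at this
      have : ((⟨i₀, hlt⟩ : Fin r).succ : ℕ) ≤ (i₀ : ℕ) := this
      simp at this
  · have hlast : i₀ = Fin.last r := by
      apply Fin.ext
      have := i₀.isLt
      simp [Fin.last]; omega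
    have hu : u = t (Fin.last r) := le_antisymm h1 (hlast ▸ hti₀)
    refine ⟨⟨r - 1, by omega⟩, ?_, ?_⟩
    · refine le_trans ?_ hu.ge
      exact hmono (by simp [Fin.le_def, Fin.last])
    · refine le_trans hu.le ?_
      have : (⟨r-1, by omega⟩ : Fin r).succ = Fin.last r := by
        apply Fin.ext; simp [Fin.last]; omega
      rw [this]

lemma convex_lt_aux {s a a' b b' : ℝ} (hs0 : 0 ≤ s) (hs1 : s ≤ 1) (h1 : a < a') (h2 : b < b') :
    (1-s)*a + s*b < (1-s)*a' + s*b' := by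
  rcases eq_or_lt_of_le hs0 with h|h
  · rw [← h]; norm_num; exact h1
  · have := mul_le_mul_of_nonneg_left h1.le (show (0:ℝ) ≤ 1-s by linarith)
    have := mul_lt_mul_of_pos_left h2 h
    linarith


theorem straight_line_homotopy_in_OC {n r : ℕ}
    (rRe rIm : Fin r → Fin n → Fin n → Prop)
    (harr : ∀ i, IsArrangement (rRe i) (rIm i))
    (F G : ℝ → (Fin n → ℂ))
    (hFc : ContinuousOn F (Set.Icc 0 1)) (hGc : ContinuousOn G (Set.Icc 0 1))
    (hFoc : ∀ u ∈ Set.Icc (0:ℝ) 1, F u ∈ OC n)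
    (hGoc : ∀ u ∈ Set.Icc (0:ℝ) 1, G u ∈ OC n)
    (t : Fin (r + 1) → ℝ) (hmono : Monotone t)
    (h0 : t 0 = 0) (h1 : t (Fin.last r) = 1)
    (hF : ∀ i : Fin r, F '' Set.Icc (t i.castSucc) (t i.succ) ⊆ cell (rRe i) (rIm i))
    (hG : ∀ i : Fin r, G '' Set.Icc (t i.castSucc) (t i.succ) ⊆ cell (rRe i) (rIm i)) :
    ∀ s ∈ Set.Icc (0:ℝ) 1, ∀ u ∈ Set.Icc (0:ℝ) 1,
      (fun k => ((1 - s : ℝ) : ℂ) * F u k + (s : ℂ) * G u k) ∈ OC n := by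
  intro s hs u hu
  have hr0 : 0 < r := by
    rcases Nat.eq_zero_or_pos r with h|h
    · subst h; rw [show (Fin.last 0) = 0 from rfl, h0] at h1; norm_num at h1
    · exact h
  obtain ⟨i, hi⟩ := exists_interval_aux hr0 t hmono (h0 ▸ hu.1) (h1 ▸ hu.2)
  have hFcell := hF i ⟨u, hi, rfl⟩
  have hGcell := hG i ⟨u, hi, rfl⟩
  intro k l hkl
  by_contra hne
  simp only at hkl
  have hre : (1-s) * (F u k).re + s * (G u k).re = (1-s) * (F u l).re + s * (G u l).re := by
    have := congrArg Complex.re hkl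
    simpa [Complex.add_re, Complex.mul_re, Complex.ofReal_re, Complex.ofReal_im] using this
  have him : (1-s) * (F u k).im + s * (G u k).im = (1-s) * (F u l).im + s * (G u l).im := by
    have := congrArg Complex.im hkl
    simpa [Complex.add_im, Complex.mul_im, Complex.ofReal_re, Complex.ofReal_im] using this
  rcases (harr i).2.2.2.2 k l hne with h | h | h | h
  · exact absurd hre (ne_of_lt (convex_lt_aux hs.1 hs.2 (hFcell.1 k l h) (hGcell.1 k l h)))
  · exact absurd hre.symm (ne_of_lt (convex_lt_aux hs.1 hs.2 (hFcell.1 l k h) (hGcell.1 l k h)))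
  · exact absurd him (ne_of_lt (convex_lt_aux hs.1 hs.2 (hFcell.2 k l h) (hGcell.2 k l h)))
  · exact absurd him.symm (ne_of_lt (convex_lt_aux hs.1 hs.2 (hFcell.2 l k h) (hGcell.2 l k h)))
end
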